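/- Let q ∈ (0,1) and let x : [0,∞) → ℝ be C¹ and T-periodic (T > 0) and nonconstant. If additionally the Caputo derivative D_*^q x is itself T-periodic, then a contradiction follows; in particular, the Caputo derivative of a nonconstant T-periodic C¹ function is never T-periodic. -/

import Mathlib

lemma deriv_periodic (T : ℝ) (hT : 0 < T) (x x' : ℝ → ℝ)
    (hx : ∀ t : ℝ, HasDerivAt x (x' t) t) (hx' : Continuous x')
    (hper : ∀ t : ℝ, 0 ≤ t → x (t + T) = x t) :
    ∀ t : ℝ, 0 ≤ t → x' (t + T) = x' t := by
  have h1 : Set.EqOn (fun t => x' (t + T)) x' (Set.Ioi 0) := by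
    intro t ht
    have hd1 : HasDerivAt (fun s => x (s + T)) (x' (t + T)) t := by
      simpa [Function.comp_def] using (hx (t + T)).comp t ((hasDerivAt_id t).add_const T)
    have hd2 : HasDerivAt (fun s => x (s + T)) (x' t) t := by
      apply (hx t).congr_of_eventuallyEq
      filter_upwards [eventually_gt_nhds ht] with s hs
      exact (hper s hs.le)
    exact hd1.unique hd2
  have h2 : Set.EqOn (fun t => x' (t + T)) x' (Set.Ici 0) := by
    have := h1.closure (by continuity) hx'
    rwa [closure_Ioi] at this
  exact fun t ht => h2 ht


open intervalIntegral in
lemma window_zero (q T : ℝ) (hq0 : 0 < q) (hq1 : q < 1) (hT : 0 < T) (x' : ℝ → ℝ)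
    (hx' : Continuous x')
    (hperd : ∀ t : ℝ, 0 ≤ t → x' (t + T) = x' t)
    (u : ℝ) (hu : T < u)
    (heq : (∫ τ in (0:ℝ)..u, (u - τ) ^ (-q) * x' τ)
      = ∫ τ in (0:ℝ)..(u - T), (u - T - τ) ^ (-q) * x' τ) :
    (∫ τ in (0:ℝ)..T, (u - τ) ^ (-q) * x' τ) = 0 := by
  set t := u - T with ht
  have ht0 : 0 < t := by simp [ht]; linarith
  -- integrability on [0,T]
  have I1 : IntervalIntegrable (fun τ => (u - τ) ^ (-q) * x' τ) MeasureTheory.volume 0 T := by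
    apply ContinuousOn.intervalIntegrable
    apply ContinuousOn.mul _ hx'.continuousOn
    apply ContinuousOn.rpow_const (by fun_prop)
    intro τ hτ
    rw [Set.uIcc_of_le hT.le] at hτ
    exact Or.inl (by simp; nlinarith [hτ.2])
  -- integrability on [T,u]
  have Iker : IntervalIntegrable (fun τ => (u - τ) ^ (-q)) MeasureTheory.volume T u := by
    have := (intervalIntegral.intervalIntegrable_rpow' (a := u - T) (b := u - u)
      (by linarith : (-1:ℝ) < -q)).comp_sub_left u
    simpa using this
  have I2 : IntervalIntegrable (fun τ => (u - τ) ^ (-q) * x' τ) MeasureTheory.volume T u :=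
    Iker.mul_continuousOn hx'.continuousOn
  -- split
  have hsplit := intervalIntegral.integral_add_adjacent_intervals I1 I2
  -- substitute in second piece
  have hsub : (∫ τ in T..u, (u - τ) ^ (-q) * x' τ)
      = ∫ s in (0:ℝ)..t, (t - s) ^ (-q) * x' s := by
    have h1 : (∫ τ in T..u, (u - τ) ^ (-q) * x' τ)
        = ∫ s in (0:ℝ)..t, (u - (s + T)) ^ (-q) * x' (s + T) := by
      rw [intervalIntegral.integral_comp_add_right (fun τ => (u - τ) ^ (-q) * x' τ) T]
      norm_num [ht]
    rw [h1]
    apply intervalIntegral.integral_congr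
    intro s hs
    rw [Set.uIcc_of_le ht0.le] at hs
    simp only []
    have h2 : u - (s + T) = t - s := by ring
    rw [h2, hperd s hs.1]
  rw [hsub, heq] at hsplit
  linarith [hsplit]


open MeasureTheory intervalIntegral Metric in
lemma moments_zero (q T : ℝ) (hq0 : 0 < q) (hT : 0 < T) (x' : ℝ → ℝ) (hx' : Continuous x')
    (H0 : ∀ u, T < u → (∫ τ in (0:ℝ)..T, (u - τ) ^ (-q) * x' τ) = 0) :
    ∀ k : ℕ, ∀ u, T < u → (∫ τ in (0:ℝ)..T, (u - τ) ^ (-q - k) * x' τ) = 0 := by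
  intro k
  induction k with
  | zero => intro u hu; simpa using H0 u hu
  | succ k IH =>
    intro u hu
    set p : ℝ := -q - k with hp
    have hpneg : p < 0 := by
      have : (0:ℝ) ≤ k := Nat.cast_nonneg k
      simp [hp]; linarith
    set δ : ℝ := (u - T) / 2 with hδ
    have hδ0 : 0 < δ := by simp [hδ]; linarith
    -- positivity of w - τ for w ∈ ball u δ, τ ∈ Ι 0 T
    have hpos : ∀ τ ∈ Set.uIoc (0:ℝ) T, ∀ w ∈ ball u δ, δ ≤ w - τ := by
      intro τ hτ w hw
      rw [Set.uIoc_of_le hT.le] at hτ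
      rw [mem_ball, Real.dist_eq, abs_lt] at hw
      have : τ ≤ T := hτ.2
      simp [hδ] at hw ⊢; linarith [hw.1]
    have meas : ∀ w : ℝ, AEStronglyMeasurable (fun τ => (w - τ) ^ p * x' τ)
        (volume.restrict (Set.uIoc (0:ℝ) T)) := by
      intro w
      exact (((measurable_const.sub measurable_id).pow_const p).mul
        hx'.measurable).aestronglyMeasurable
    have Fint : ∀ w, T < w → IntervalIntegrable (fun τ => (w - τ) ^ p * x' τ) volume 0 T := by
      intro w hw
      apply ContinuousOn.intervalIntegrable
      apply ContinuousOn.mul _ hx'.continuousOn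
      apply ContinuousOn.rpow_const (by fun_prop)
      intro τ hτ
      rw [Set.uIcc_of_le hT.le] at hτ
      exact Or.inl (by simp; nlinarith [hτ.2])
    have key := intervalIntegral.hasDerivAt_integral_of_dominated_loc_of_deriv_le
      (F := fun w τ => (w - τ) ^ p * x' τ)
      (F' := fun w τ => (p * (w - τ) ^ (p - 1)) * x' τ)
      (x₀ := u) (a := 0) (b := T) (μ := volume)
      (bound := fun τ => (-p) * δ ^ (p - 1) * |x' τ|)
      (ball_mem_nhds u hδ0)
      (Filter.Eventually.of_forall meas)
      (Fint u hu)
      ((((measurable_const.sub measurable_id).pow_const (p-1)).const_mul p).mul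
        hx'.measurable).aestronglyMeasurable
      ?_ ?_ ?_
    · -- the integral function is eventually 0, so derivative is 0
      have hzero : HasDerivAt (fun w => ∫ τ in (0:ℝ)..T, (w - τ) ^ p * x' τ) 0 u := by
        apply (hasDerivAt_const u (0:ℝ)).congr_of_eventuallyEq
        filter_upwards [Ioi_mem_nhds hu] with w hw
        have := IH w hw
        simpa [hp] using this
      have huniq : (∫ τ in (0:ℝ)..T, p * (u - τ) ^ (p - 1) * x' τ) = 0 := by
        simpa using key.2.unique hzero
      have h2 : (∫ τ in (0:ℝ)..T, p * ((u - τ) ^ (p - 1) * x' τ)) = 0 := by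
        rw [intervalIntegral.integral_congr
          (g := fun τ => p * (u - τ) ^ (p - 1) * x' τ) (fun τ _ => by ring)]
        exact huniq
      rw [intervalIntegral.integral_const_mul] at h2
      have hpne : p ≠ 0 := ne_of_lt hpneg
      have h3 : (∫ τ in (0:ℝ)..T, (u - τ) ^ (p - 1) * x' τ) = 0 := by
        rcases mul_eq_zero.mp h2 with h | h
        · exact absurd h hpne
        · exact h
      have : -q - (k+1:ℕ) = p - 1 := by push_cast [hp]; ring
      rw [this]
      exact h3
    · -- bound
      apply Filter.Eventually.of_forall
      intro τ hτ w hw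
      have h1 : δ ≤ w - τ := hpos τ hτ w hw
      have h2 : (w - τ) ^ (p - 1) ≤ δ ^ (p - 1) :=
        Real.rpow_le_rpow_of_nonpos hδ0 h1 (by linarith)
      have h3 : (0:ℝ) ≤ (w - τ) ^ (p - 1) := Real.rpow_nonneg (by linarith) _
      show ‖p * (w - τ) ^ (p - 1) * x' τ‖ ≤ -p * δ ^ (p - 1) * |x' τ|
      rw [Real.norm_eq_abs, abs_mul, abs_mul]
      calc |p| * |(w - τ) ^ (p - 1)| * |x' τ| = (-p) * (w - τ) ^ (p - 1) * |x' τ| := by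
            rw [abs_of_neg hpneg, abs_of_nonneg h3]
        _ ≤ (-p) * δ ^ (p - 1) * |x' τ| := by
            apply mul_le_mul_of_nonneg_right _ (abs_nonneg _)
            exact mul_le_mul_of_nonneg_left h2 (by linarith)
    · -- bound integrable
      apply ContinuousOn.intervalIntegrable
      exact (continuousOn_const.mul hx'.abs.continuousOn)
    · -- differentiability
      apply Filter.Eventually.of_forall
      intro τ hτ w hw
      have h1 : 0 < w - τ := lt_of_lt_of_le hδ0 (hpos τ hτ w hw)
      have hd : HasDerivAt (fun w => (w - τ) ^ p) (p * (w - τ) ^ (p - 1)) w := by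
        have hbase : HasDerivAt (fun w : ℝ => w - τ) 1 w := (hasDerivAt_id w).sub_const τ
        have hrp := Real.hasDerivAt_rpow_const (x := w - τ) (p := p) (Or.inl (ne_of_gt h1))
        simpa [Function.comp_def] using hrp.comp w hbase
      exact hd.mul_const (x' τ)


open MeasureTheory intervalIntegral Polynomial in
lemma xprime_zero (q T : ℝ) (hq0 : 0 < q) (hT : 0 < T) (x' : ℝ → ℝ) (hx' : Continuous x')
    (Hk : ∀ k : ℕ, (∫ τ in (0:ℝ)..T, (2*T - τ) ^ (-q - k) * x' τ) = 0) :
    ∀ s ∈ Set.Icc (0:ℝ) T, x' s = 0 := by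
  set F : ℝ → ℝ := fun τ => (2*T - τ) ^ (-q) * x' τ with hF
  have hFcont : ContinuousOn F (Set.Iio (2*T)) := by
    apply ContinuousOn.mul _ hx'.continuousOn
    apply ContinuousOn.rpow_const (by fun_prop)
    intro τ hτ
    exact Or.inl (by simp at hτ ⊢; linarith)
  have hsub : Set.uIcc (0:ℝ) T ⊆ Set.Iio (2*T) := by
    rw [Set.uIcc_of_le hT.le]
    intro τ hτ; simp at hτ ⊢; linarith [hτ.2]
  have hFcont' : ContinuousOn F (Set.uIcc (0:ℝ) T) := hFcont.mono hsub
  -- continuity of τ ↦ eval ((2T-τ)⁻¹) p on uIcc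
  have hevalcont : ∀ p : ℝ[X], ContinuousOn (fun τ => Polynomial.eval (2*T - τ)⁻¹ p)
      (Set.uIcc (0:ℝ) T) := by
    intro p
    apply (p.continuous_aeval).comp_continuousOn
    apply ContinuousOn.inv₀ (by fun_prop)
    intro τ hτ
    have := hsub hτ; simp at this ⊢; linarith
  have hint : ∀ p : ℝ[X], IntervalIntegrable (fun τ => F τ * Polynomial.eval (2*T - τ)⁻¹ p)
      volume 0 T := fun p => (hFcont'.mul (hevalcont p)).intervalIntegrable
  -- J p = 0 for all polynomials
  have hJ : ∀ p : ℝ[X], (∫ τ in (0:ℝ)..T, F τ * Polynomial.eval (2*T - τ)⁻¹ p) = 0 := by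
    intro p
    induction p using Polynomial.induction_on' with
    | add p r hp hr =>
      have := intervalIntegral.integral_add (hint p) (hint r)
      rw [intervalIntegral.integral_congr
        (g := fun τ => F τ * Polynomial.eval (2*T - τ)⁻¹ p
          + F τ * Polynomial.eval (2*T - τ)⁻¹ r) (fun τ _ => by simp; ring), this, hp, hr,
        add_zero]
    | monomial n a =>
      have hcong : ∀ τ ∈ Set.uIcc (0:ℝ) T,
          F τ * Polynomial.eval (2*T - τ)⁻¹ (Polynomial.monomial n a)
            = a * ((2*T - τ) ^ (-q - n) * x' τ) := by
        intro τ hτ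
        have hpos : 0 < 2*T - τ := by have := hsub hτ; simp at this; linarith
        have h1 : (2*T - τ) ^ (-q - (n:ℝ)) = (2*T - τ) ^ (-q) / (2*T - τ) ^ (n:ℕ) := by
          rw [Real.rpow_sub hpos, Real.rpow_natCast]
        simp only [hF, Polynomial.eval_monomial, h1, inv_pow]
        have h2 : ((2*T - τ):ℝ) ^ (n:ℕ) ≠ 0 := pow_ne_zero _ (ne_of_gt hpos)
        field_simp
      rw [intervalIntegral.integral_congr hcong, intervalIntegral.integral_const_mul, Hk n,
        mul_zero]
  -- Stone-Weierstrass setup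
  set X := Set.Icc (0:ℝ) T
  have h2T : ∀ τ : X, 2*T - (τ:ℝ) ≠ 0 := by
    intro τ; have := τ.2.2; have := τ.2.1; simp; linarith
  set e : C(X, ℝ) := ⟨fun τ => (2*T - (τ:ℝ))⁻¹, by
    apply Continuous.inv₀ (by fun_prop)
    exact h2T⟩ with he
  set A : Subalgebra ℝ C(X, ℝ) := Algebra.adjoin ℝ {e} with hA
  have sep : A.SeparatesPoints := by
    intro y z hyz
    refine ⟨e, ⟨e, Algebra.subset_adjoin rfl, rfl⟩, ?_⟩
    simp only [he, ContinuousMap.coe_mk]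
    intro hcon
    rw [inv_inj] at hcon
    exact hyz (Subtype.ext (by linarith))
  -- integral of F squared is zero
  have hsq : (∫ τ in (0:ℝ)..T, F τ ^ 2) = 0 := by
    have hFC : Continuous (fun τ : X => F (τ:ℝ)) :=
      hFcont.comp_continuous continuous_subtype_val (fun τ => by
        have := τ.2.2; have := τ.2.1; simp [Set.mem_Iio]; linarith)
    have hFint : IntervalIntegrable F volume 0 T := hFcont'.intervalIntegrable
    have habs : IntervalIntegrable (fun τ => |F τ|) volume 0 T := hFint.abs
    have hsqint : IntervalIntegrable (fun τ => F τ ^ 2) volume 0 T := by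
      have : ContinuousOn (fun τ => F τ ^ 2) (Set.uIcc (0:ℝ) T) := hFcont'.pow 2
      exact this.intervalIntegrable
    have hnonneg : 0 ≤ ∫ τ in (0:ℝ)..T, F τ ^ 2 :=
      intervalIntegral.integral_nonneg hT.le (fun τ _ => sq_nonneg _)
    set C : ℝ := (∫ τ in (0:ℝ)..T, |F τ|) + 1 with hC
    have hC0 : 0 < C := by
      have : 0 ≤ ∫ τ in (0:ℝ)..T, |F τ| :=
        intervalIntegral.integral_nonneg hT.le (fun τ _ => abs_nonneg _)
      simp [hC]; linarith
    have key : ∀ ε : ℝ, 0 < ε → (∫ τ in (0:ℝ)..T, F τ ^ 2) ≤ ε * C := by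
      intro ε hε
      obtain ⟨g, hg⟩ := ContinuousMap.exists_mem_subalgebra_near_continuous_of_separatesPoints
        A sep (fun τ : X => F (τ:ℝ)) hFC ε hε
      have hmem : (g : C(X,ℝ)) ∈ Algebra.adjoin ℝ {e} := g.2
      rw [Algebra.adjoin_singleton_eq_range_aeval] at hmem
      obtain ⟨p, hp⟩ := hmem
      set gp : ℝ → ℝ := fun τ => Polynomial.eval (2*T - τ)⁻¹ p with hgp
      have hgval : ∀ τ : ℝ, ∀ hτ : τ ∈ X, (g : C(X,ℝ)) ⟨τ, hτ⟩ = gp τ := by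
        intro τ hτ
        have hp' : (Polynomial.aeval e) p = (g : C(X,ℝ)) := hp
        rw [← hp', Polynomial.aeval_continuousMap_apply]
        simp [he, hgp]
      have hptw : ∀ τ ∈ Set.Icc (0:ℝ) T, |F τ ^ 2 - F τ * gp τ| ≤ |F τ| * ε := by
        intro τ hτ
        have h1 : F τ ^ 2 - F τ * gp τ = F τ * (F τ - gp τ) := by ring
        rw [h1, abs_mul]
        apply mul_le_mul_of_nonneg_left _ (abs_nonneg _)
        have := hg ⟨τ, hτ⟩
        rw [hgval τ hτ] at this
        rw [Real.norm_eq_abs] at this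
        rw [abs_sub_comm]
        exact this.le
      have hgpint : IntervalIntegrable (fun τ => F τ * gp τ) volume 0 T := hint p
      have hdiffint : IntervalIntegrable (fun τ => F τ ^ 2 - F τ * gp τ) volume 0 T :=
        hsqint.sub hgpint
      have h1 : (∫ τ in (0:ℝ)..T, F τ ^ 2)
          = ∫ τ in (0:ℝ)..T, (F τ ^ 2 - F τ * gp τ) := by
        rw [intervalIntegral.integral_sub hsqint hgpint, hJ p, sub_zero]
      calc (∫ τ in (0:ℝ)..T, F τ ^ 2) = ∫ τ in (0:ℝ)..T, (F τ ^ 2 - F τ * gp τ) := h1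
        _ ≤ |∫ τ in (0:ℝ)..T, (F τ ^ 2 - F τ * gp τ)| := le_abs_self _
        _ ≤ ∫ τ in (0:ℝ)..T, |F τ ^ 2 - F τ * gp τ| :=
            intervalIntegral.abs_integral_le_integral_abs hT.le
        _ ≤ ∫ τ in (0:ℝ)..T, |F τ| * ε :=
            intervalIntegral.integral_mono_on hT.le hdiffint.abs (habs.mul_const ε) hptw
        _ = ε * ∫ τ in (0:ℝ)..T, |F τ| := by
            rw [← intervalIntegral.integral_const_mul]
            apply intervalIntegral.integral_congr
            intro τ _; ring
        _ ≤ ε * C := by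
            apply mul_le_mul_of_nonneg_left _ hε.le
            simp only [hC]; linarith
    -- conclude integral of F^2 is zero
    by_contra h
    have hpos : 0 < ∫ τ in (0:ℝ)..T, F τ ^ 2 := lt_of_le_of_ne hnonneg (Ne.symm h)
    have hk := key ((∫ τ in (0:ℝ)..T, F τ ^ 2) / (2*C)) (by positivity)
    rw [div_mul_eq_mul_div] at hk
    have h6 : (∫ τ in (0:ℝ)..T, F τ ^ 2) * C / (2 * C) = (∫ τ in (0:ℝ)..T, F τ ^ 2) / 2 := by
      field_simp
    rw [h6] at hk
    linarith
  -- now deduce pointwise vanishing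
  have hsupp : volume (Function.support (fun τ => F τ ^ 2) ∩ Set.Ioc 0 T) = 0 := by
    have hsqint : IntervalIntegrable (fun τ => F τ ^ 2) volume 0 T :=
      (hFcont'.pow 2).intervalIntegrable
    have hiff := intervalIntegral.integral_pos_iff_support_of_nonneg_ae'
      (f := fun τ => F τ ^ 2) (a := 0) (b := T) (μ := volume)
      (Filter.Eventually.of_forall (fun τ => sq_nonneg _)) hsqint
    by_contra hne
    have h2 : 0 < volume (Function.support (fun τ => F τ ^ 2) ∩ Set.Ioc 0 T) :=
      lt_of_le_of_ne zero_le (Ne.symm hne)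
    have h3 := hiff.mpr ⟨hT, h2⟩
    rw [hsq] at h3
    exact lt_irrefl 0 h3
  intro s hs
  by_contra hxs
  have hFs : F s ≠ 0 := by
    have hpos : (0:ℝ) < (2*T - s) ^ (-q) :=
      Real.rpow_pos_of_pos (by have := hs.2; linarith) _
    simp only [hF]
    exact mul_ne_zero (ne_of_gt hpos) hxs
  have hCA : ContinuousAt F s :=
    hFcont.continuousAt (isOpen_Iio.mem_nhds (by have := hs.2; simp [Set.mem_Iio]; linarith))
  have hev := hCA.eventually_ne hFs
  rw [Metric.eventually_nhds_iff] at hev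
  obtain ⟨δ, hδ0, hδ⟩ := hev
  obtain ⟨lo, hi, hlohi, hsub2⟩ : ∃ lo hi : ℝ, lo < hi ∧
      Set.Ioo lo hi ⊆ Function.support (fun τ => F τ ^ 2) ∩ Set.Ioc 0 T := by
    rcases lt_or_eq_of_le hs.2 with hsT | hsT
    · refine ⟨s, min (s + δ) T, by simp [hsT, hδ0], ?_⟩
      intro y hy
      obtain ⟨hy1, hy2⟩ := hy
      have hyT : y ≤ T := le_of_lt (lt_of_lt_of_le hy2 (min_le_right _ _))
      have hyd : dist y s < δ := by
        rw [Real.dist_eq, abs_of_pos (by linarith : (0:ℝ) < y - s)]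
        have := lt_of_lt_of_le hy2 (min_le_left _ _); linarith
      refine ⟨?_, ⟨by have := hs.1; linarith, hyT⟩⟩
      simp only [Function.mem_support]
      exact pow_ne_zero 2 (hδ hyd)
    · refine ⟨max (T - δ) 0, T, by simp [hδ0, hT], ?_⟩
      intro y hy
      obtain ⟨hy1, hy2⟩ := hy
      have hy0 : 0 < y := lt_of_le_of_lt (le_max_right _ _) hy1
      have hyδ : T - δ < y := lt_of_le_of_lt (le_max_left _ _) hy1
      have hyd : dist y s < δ := by
        rw [hsT, Real.dist_eq, abs_of_nonpos (by linarith : y - T ≤ 0)]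
        linarith
      refine ⟨?_, ⟨hy0, hy2.le⟩⟩
      simp only [Function.mem_support]
      exact pow_ne_zero 2 (hδ hyd)
  have hle := MeasureTheory.measure_mono (μ := MeasureTheory.volume) hsub2
  rw [hsupp, Real.volume_Ioo] at hle
  have hfin : (0:ENNReal) < ENNReal.ofReal (hi - lo) := by
    rw [ENNReal.ofReal_pos]; linarith
  exact absurd (le_antisymm hle zero_le) (ne_of_gt hfin)


theorem caputo_deriv_periodic_contradiction (q T : ℝ) (hq0 : 0 < q) (hq1 : q < 1)
    (hT : 0 < T) (x x' : ℝ → ℝ)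
    (hx : ∀ t : ℝ, HasDerivAt x (x' t) t) (hx' : Continuous x')
    (hper : ∀ t : ℝ, 0 ≤ t → x (t + T) = x t)
    (hnonconst : ∃ a b : ℝ, 0 ≤ a ∧ 0 ≤ b ∧ x a ≠ x b) :
    ¬ (∀ t : ℝ, 0 ≤ t →
        (1 / Real.Gamma (1 - q)) * ∫ τ in (0 : ℝ)..(t + T), (t + T - τ) ^ (-q) * x' τ
          = (1 / Real.Gamma (1 - q)) * ∫ τ in (0 : ℝ)..t, (t - τ) ^ (-q) * x' τ) := by
  intro h
  have hΓ : (0:ℝ) < Real.Gamma (1 - q) := Real.Gamma_pos_of_pos (by linarith)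
  have hΓne : (1 / Real.Gamma (1 - q)) ≠ 0 := one_div_ne_zero (ne_of_gt hΓ)
  have heq : ∀ t : ℝ, 0 ≤ t →
      (∫ τ in (0 : ℝ)..(t + T), (t + T - τ) ^ (-q) * x' τ)
        = ∫ τ in (0 : ℝ)..t, (t - τ) ^ (-q) * x' τ :=
    fun t ht => mul_left_cancel₀ hΓne (h t ht)
  have hperd := deriv_periodic T hT x x' hx hx' hper
  have H0 : ∀ u, T < u → (∫ τ in (0:ℝ)..T, (u - τ) ^ (-q) * x' τ) = 0 := by
    intro u hu
    apply window_zero q T hq0 hq1 hT x' hx' hperd u hu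
    have h1 := heq (u - T) (by linarith)
    rw [show u - T + T = u by ring] at h1
    exact h1
  have Hk : ∀ k : ℕ, (∫ τ in (0:ℝ)..T, (2*T - τ) ^ (-q - k) * x' τ) = 0 :=
    fun k => moments_zero q T hq0 hT x' hx' H0 k (2*T) (by linarith)
  have hx0 : ∀ s ∈ Set.Icc (0:ℝ) T, x' s = 0 := xprime_zero q T hq0 hT x' hx' Hk
  -- extend vanishing of x' to [0, ∞)
  have hstep : ∀ n : ℕ, ∀ s : ℝ, 0 ≤ s → s ≤ T + n*T → x' s = 0 := by
    intro n
    induction n with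
    | zero => intro s h0 hle; exact hx0 s ⟨h0, by simpa using hle⟩
    | succ n IH =>
      intro s h0 hle
      by_cases hsc : s ≤ T + n*T
      · exact IH s h0 hsc
      · push_neg at hsc
        have hn0 : (0:ℝ) ≤ n*T := mul_nonneg (Nat.cast_nonneg n) hT.le
        have h1 : 0 ≤ s - T := by linarith
        have h2 : s - T ≤ T + n*T := by push_cast at hle ⊢; linarith
        have := hperd (s - T) h1
        rw [show s - T + T = s by ring] at this
        rw [this]
        exact IH (s - T) h1 h2
  have hx'0 : ∀ s : ℝ, 0 ≤ s → x' s = 0 := by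
    intro s hs
    obtain ⟨n, hn⟩ := exists_nat_ge (s / T)
    apply hstep n s hs
    have : s ≤ n * T := by
      rw [div_le_iff₀ hT] at hn
      linarith
    linarith
  -- x is constant on [0, ∞)
  have hconst : ∀ a : ℝ, 0 ≤ a → x a = x 0 := by
    intro a ha
    have hftc := intervalIntegral.integral_eq_sub_of_hasDerivAt
      (f := x) (f' := x') (a := 0) (b := a)
      (fun t _ => hx t) (hx'.intervalIntegrable 0 a)
    have hz : (∫ τ in (0:ℝ)..a, x' τ) = 0 := by
      rw [intervalIntegral.integral_congr (g := fun _ => (0:ℝ))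
        (fun τ hτ => by
          rw [Set.uIcc_of_le ha] at hτ
          exact hx'0 τ hτ.1)]
      simp
    rw [hz] at hftc
    linarith [hftc]
  obtain ⟨a, b, ha, hb, hab⟩ := hnonconst
  exact hab (by rw [hconst a ha, hconst b hb])
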